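/- For any finite tree T with maximum degree Δ(T) ≥ 3, the independent domination number satisfies 2·i(T) ≤ Δ(T)·γ(T). -/

import Mathlib

open Finset

/-- `D` is a dominating set of `G`: every vertex outside `D` has a neighbor in `D`. -/
def IsDomSet {V : Type*} (G : SimpleGraph V) (D : Finset V) : Prop :=
  ∀ v ∉ D, ∃ u ∈ D, G.Adj u v

/-- `D` is an independent set of `G`. -/
def IsIndepSet {V : Type*} (G : SimpleGraph V) (D : Finset V) : Prop :=
  ∀ u ∈ D, ∀ v ∈ D, ¬ G.Adj u v

/-- The domination number. -/
noncomputable def domNum {V : Type*} [Fintype V] (G : SimpleGraph V) : ℕ :=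
  sInf {n | ∃ D : Finset V, IsDomSet G D ∧ D.card = n}

/-- The independent domination number. -/
noncomputable def indDomNum {V : Type*} [Fintype V] (G : SimpleGraph V) : ℕ :=
  sInf {n | ∃ D : Finset V, IsDomSet G D ∧ IsIndepSet G D ∧ D.card = n}

/-- In a tree, adjacent vertices have different distances to any root. -/
lemma tree_dist_ne {V : Type*} {T : SimpleGraph V} (ht : T.IsTree) (r u v : V)
    (huv : T.Adj u v) : T.dist r u ≠ T.dist r v := by
  classical
  intro heq
  obtain ⟨p, hp, hpl⟩ := (ht.isConnected r u).exists_path_of_dist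
  by_cases hv : v ∈ p.support
  · have h1 : T.dist r v ≤ (p.takeUntil v hv).length := SimpleGraph.dist_le _
    have h2 := congrArg SimpleGraph.Walk.length (p.take_spec hv)
    rw [SimpleGraph.Walk.length_append] at h2
    have h3 : (p.dropUntil v hv).length = 0 := by omega
    have h4 : v = u := SimpleGraph.Walk.eq_of_length_eq_zero h3
    subst h4
    exact T.irrefl huv
  · have hvr : v ∉ p.reverse.support := by
      rwa [SimpleGraph.Walk.support_reverse, List.mem_reverse]
    have hq : (SimpleGraph.Walk.cons huv.symm p.reverse).IsPath := by
      rw [SimpleGraph.Walk.cons_isPath_iff]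
      exact ⟨hp.reverse, hvr⟩
    obtain ⟨p', hp', hpl'⟩ := (ht.isConnected v r).exists_path_of_dist
    have huniq := ht.IsAcyclic.path_unique
      ⟨SimpleGraph.Walk.cons huv.symm p.reverse, hq⟩ ⟨p', hp'⟩
    have hlen : (SimpleGraph.Walk.cons huv.symm p.reverse).length = p'.length :=
      congrArg (fun q : T.Path v r => q.val.length) huniq
    rw [SimpleGraph.Walk.length_cons, SimpleGraph.Walk.length_reverse] at hlen
    rw [SimpleGraph.dist_comm (u := v)] at hpl'
    omega

/-- Every finite set contains a maximum-cardinality independent subset; it is maximal. -/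
lemma exists_max_indep {V : Type*} (T : SimpleGraph V) (D : Finset V) :
    ∃ S, S ⊆ D ∧ IsIndepSet T S ∧ (∀ v ∈ D, v ∉ S → ∃ u ∈ S, T.Adj u v) ∧
      (∀ S' ⊆ D, IsIndepSet T S' → S'.card ≤ S.card) := by
  classical
  have hne : (D.powerset.filter fun S => IsIndepSet T S).Nonempty :=
    ⟨∅, Finset.mem_filter.mpr ⟨Finset.empty_mem_powerset _, by simp [IsIndepSet]⟩⟩
  obtain ⟨S, hS, hmax⟩ := Finset.exists_max_image _ Finset.card hne
  simp only [Finset.mem_filter, Finset.mem_powerset] at hS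
  have hmax' : ∀ S' ⊆ D, IsIndepSet T S' → S'.card ≤ S.card := by
    intro S' h1 h2
    exact hmax S' (by simp [Finset.mem_filter, Finset.mem_powerset, h1, h2])
  refine ⟨S, hS.1, hS.2, ?_, hmax'⟩
  intro v hvD hvS
  by_contra hc
  push_neg at hc
  have hind : IsIndepSet T (insert v S) := by
    intro a ha b hb hadj
    rcases Finset.mem_insert.mp ha with ha' | ha' <;>
      rcases Finset.mem_insert.mp hb with hb' | hb'
    · rw [ha', hb'] at hadj; exact T.irrefl hadj
    · rw [ha'] at hadj; exact hc b hb' hadj.symm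
    · rw [hb'] at hadj; exact hc a ha' hadj
    · exact hS.2 a ha' b hb' hadj
  have hsub : insert v S ⊆ D := by
    intro x hx
    rcases Finset.mem_insert.mp hx with rfl | hx
    · exact hvD
    · exact hS.1 hx
  have := hmax' (insert v S) hsub hind
  rw [Finset.card_insert_of_notMem hvS] at this
  omega

theorem stmt3 {V : Type*} [Fintype V] (T : SimpleGraph V) [DecidableRel T.Adj]
    (htree : T.IsTree) (h : 3 ≤ T.maxDegree) :
    2 * indDomNum T ≤ T.maxDegree * domNum T := by
  classical
  have hconn := htree.isConnected
  obtain ⟨r⟩ : Nonempty V := hconn.nonempty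
  -- adjacent vertices have different parity of distance to r
  have hpar : ∀ u v : V, T.Adj u v → T.dist r u % 2 = T.dist r v % 2 → False := by
    intro u v huv hpe
    have h1 : T.dist r v ≤ T.dist r u + 1 := by
      have := hconn.dist_triangle (u := r) (v := u) (w := v)
      rwa [SimpleGraph.dist_eq_one_iff_adj.mpr huv] at this
    have h2 : T.dist r u ≤ T.dist r v + 1 := by
      have := hconn.dist_triangle (u := r) (v := v) (w := u)
      rwa [SimpleGraph.dist_eq_one_iff_adj.mpr huv.symm] at this
    have h3 := tree_dist_ne htree r u v huv
    omega
  -- a minimum dominating set D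
  have hne : {n | ∃ D : Finset V, IsDomSet T D ∧ D.card = n}.Nonempty :=
    ⟨Finset.univ.card, Finset.univ, fun v hv => absurd (Finset.mem_univ v) hv, rfl⟩
  obtain ⟨D, hDdom, hDcard⟩ := Nat.sInf_mem hne
  -- maximum independent subset S of D
  obtain ⟨S, hSD, hSind, hSdom, hSmax⟩ := exists_max_indep T D
  -- 2 |S| ≥ |D| via bipartition
  have hhalf : D.card ≤ 2 * S.card := by
    have even_indep : IsIndepSet T (D.filter fun v => T.dist r v % 2 = 0) := by
      intro a ha b hb hadj
      rw [Finset.mem_filter] at ha hb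
      exact hpar a b hadj (by omega)
    have odd_indep : IsIndepSet T (D.filter fun v => ¬ (T.dist r v % 2 = 0)) := by
      intro a ha b hb hadj
      rw [Finset.mem_filter] at ha hb
      exact hpar a b hadj (by omega)
    have hsum := Finset.card_filter_add_card_filter_not
      (s := D) (p := fun v => T.dist r v % 2 = 0)
    have h1 := hSmax _ (Finset.filter_subset _ D) even_indep
    have h2 := hSmax _ (Finset.filter_subset _ D) odd_indep
    omega
  -- U : vertices undominated by S ; M maximal independent inside U
  set U : Finset V := Finset.univ.filter (fun w => w ∉ S ∧ ∀ u ∈ S, ¬ T.Adj u w) with hUdef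
  obtain ⟨M, hMU, hMind, hMdom, _⟩ := exists_max_indep T U
  have hMU' : ∀ m ∈ M, m ∉ S ∧ ∀ u ∈ S, ¬ T.Adj u m := by
    intro m hm
    have := hMU hm
    rw [hUdef, Finset.mem_filter] at this
    exact this.2
  -- I = S ∪ M is independent dominating
  set I : Finset V := S ∪ M with hIdef
  have hIind : IsIndepSet T I := by
    intro a ha b hb hadj
    rcases Finset.mem_union.mp ha with haS | haM <;>
      rcases Finset.mem_union.mp hb with hbS | hbM
    · exact hSind a haS b hbS hadj
    · exact (hMU' b hbM).2 a haS hadj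
    · exact (hMU' a haM).2 b hbS hadj.symm
    · exact hMind a haM b hbM hadj
  have hIdom : IsDomSet T I := by
    intro v hv
    rw [hIdef, Finset.mem_union] at hv
    push_neg at hv
    by_cases hvU : v ∈ U
    · obtain ⟨m, hm, hadj⟩ := hMdom v hvU hv.2
      exact ⟨m, Finset.mem_union_right _ hm, hadj⟩
    · rw [hUdef, Finset.mem_filter] at hvU
      push_neg at hvU
      obtain ⟨u, hu, hadj⟩ := hvU (Finset.mem_univ v) hv.1
      exact ⟨u, Finset.mem_union_left _ hu, hadj⟩
  have hi : indDomNum T ≤ I.card := Nat.sInf_le ⟨I, hIdom, hIind, rfl⟩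
  -- bound on |M|
  have hDS : ∀ m ∈ M, ∃ v ∈ D \ S, T.Adj v m := by
    intro m hm
    obtain ⟨hmS, hmAdj⟩ := hMU' m hm
    have hmD : m ∉ D := by
      intro hmD
      obtain ⟨u, hu, hadj⟩ := hSdom m hmD hmS
      exact hmAdj u hu hadj
    obtain ⟨v, hvD, hadj⟩ := hDdom m hmD
    refine ⟨v, Finset.mem_sdiff.mpr ⟨hvD, fun hvS => hmAdj v hvS hadj⟩, hadj⟩
  have hMsub : M ⊆ (D \ S).biUnion (fun v => T.neighborFinset v ∩ M) := by
    intro m hm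
    obtain ⟨v, hv, hadj⟩ := hDS m hm
    exact Finset.mem_biUnion.mpr
      ⟨v, hv, Finset.mem_inter.mpr ⟨(T.mem_neighborFinset v m).mpr hadj, hm⟩⟩
  have hMcard : M.card ≤ (D \ S).card * (T.maxDegree - 1) := by
    calc M.card ≤ ((D \ S).biUnion (fun v => T.neighborFinset v ∩ M)).card :=
          Finset.card_le_card hMsub
      _ ≤ ∑ v ∈ D \ S, (T.neighborFinset v ∩ M).card := Finset.card_biUnion_le
      _ ≤ ∑ _v ∈ D \ S, (T.maxDegree - 1) := by
          apply Finset.sum_le_sum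
          intro v hv
          rw [Finset.mem_sdiff] at hv
          obtain ⟨u, huS, hadj⟩ := hSdom v hv.1 hv.2
          have huN : u ∈ T.neighborFinset v := (T.mem_neighborFinset v u).mpr hadj.symm
          have huM : u ∉ M := fun huM => (hMU' u huM).1 huS
          have hsub : T.neighborFinset v ∩ M ⊆ (T.neighborFinset v).erase u := by
            intro x hx
            rw [Finset.mem_inter] at hx
            rw [Finset.mem_erase]
            exact ⟨fun he => huM (he ▸ hx.2), hx.1⟩
          calc (T.neighborFinset v ∩ M).card
              ≤ ((T.neighborFinset v).erase u).card := Finset.card_le_card hsub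
            _ = T.degree v - 1 := by rw [Finset.card_erase_of_mem huN]; rfl
            _ ≤ T.maxDegree - 1 := Nat.sub_le_sub_right (T.degree_le_maxDegree v) 1
      _ = (D \ S).card * (T.maxDegree - 1) := by rw [Finset.sum_const, smul_eq_mul]
  -- final arithmetic
  have hIcard : I.card ≤ S.card + M.card := Finset.card_union_le _ _
  have hSle : S.card ≤ D.card := Finset.card_le_card hSD
  have hDScard : (D \ S).card = D.card - S.card := Finset.card_sdiff_of_subset hSD
  obtain ⟨f, hf⟩ : ∃ f, T.maxDegree = f + 2 := ⟨T.maxDegree - 2, by omega⟩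
  obtain ⟨b, hb⟩ : ∃ b, D.card = S.card + b := ⟨D.card - S.card, by omega⟩
  have hbS : b ≤ S.card := by omega
  have hMcard' : M.card ≤ b * (f + 1) := by
    rw [hDScard, hb] at hMcard
    have : S.card + b - S.card = b := by omega
    rw [this] at hMcard
    have : T.maxDegree - 1 = f + 1 := by omega
    rwa [this] at hMcard
  have hfb : f * b ≤ f * S.card := Nat.mul_le_mul_left f hbS
  calc 2 * indDomNum T ≤ 2 * I.card := by omega
    _ ≤ T.maxDegree * domNum T := by
        have hDcard' : D.card = domNum T := hDcard
        rw [← hDcard', hf, hb]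
        nlinarith [hIcard, hMcard', hfb]
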